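/- Let H̃ ∈ ℝ^{d×d} be symmetric and invertible with H̃² ⪰ μ²I, and let Q ∈ 𝕊^d_{++} satisfy H̃² ⪯ Q ⪯ η H̃² for some η ≥ 1. Then for any g ∈ ℝᵈ, the Newton-type residual satisfies ‖g − H̃ Q⁻¹ H̃ g‖ ≤ (1 − 1/η)‖g‖. -/

import Mathlib

open Matrix

private lemma dot_symm {n : Type*} [Fintype n] {A : Matrix n n ℝ} (hA : A.IsHermitian)
    (u v : n → ℝ) : u ⬝ᵥ A *ᵥ v = v ⬝ᵥ A *ᵥ u := by
  have hAt : Aᵀ = A := by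
    rw [← Matrix.conjTranspose_eq_transpose_of_trivial]; exact hA.eq
  calc u ⬝ᵥ A *ᵥ v = (u ᵥ* A) ⬝ᵥ v := Matrix.dotProduct_mulVec _ _ _
    _ = (A *ᵥ u) ⬝ᵥ v := by rw [← Matrix.mulVec_transpose, hAt]
    _ = v ⬝ᵥ A *ᵥ u := dotProduct_comm _ _

private lemma inv_sub_inv_psd {n : Type*} [Fintype n] [DecidableEq n]
    {A B : Matrix n n ℝ} (hA : A.PosDef) (hB : B.PosDef) (h : (B - A).PosSemidef) :
    (A⁻¹ - B⁻¹).PosSemidef := by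
  have hAdet : IsUnit A.det := (Matrix.isUnit_iff_isUnit_det A).mp hA.isUnit
  have hBdet : IsUnit B.det := (Matrix.isUnit_iff_isUnit_det B).mp hB.isUnit
  refine Matrix.PosSemidef.of_dotProduct_mulVec_nonneg
    ((hA.isHermitian.inv).sub (hB.isHermitian.inv)) fun x => ?_
  set y := B⁻¹ *ᵥ x with hy
  set z := A⁻¹ *ᵥ x with hz
  have hAz : A *ᵥ z = x := by
    rw [hz, Matrix.mulVec_mulVec, Matrix.mul_nonsing_inv _ hAdet, Matrix.one_mulVec]
  have hBy : B *ᵥ y = x := by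
    rw [hy, Matrix.mulVec_mulVec, Matrix.mul_nonsing_inv _ hBdet, Matrix.one_mulVec]
  have key : x ⬝ᵥ (A⁻¹ - B⁻¹) *ᵥ x
      = (z - y) ⬝ᵥ A *ᵥ (z - y) + y ⬝ᵥ (B - A) *ᵥ y := by
    have hAzy : A *ᵥ (z - y) = x - A *ᵥ y := by rw [Matrix.mulVec_sub, hAz]
    have hBAy : (B - A) *ᵥ y = x - A *ᵥ y := by rw [Matrix.sub_mulVec, hBy]
    have hzAy : z ⬝ᵥ A *ᵥ y = y ⬝ᵥ x := by rw [dot_symm hA.isHermitian, hAz]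
    rw [Matrix.sub_mulVec, dotProduct_sub, hAzy, hBAy, ← hz, ← hy]
    simp only [dotProduct_sub, sub_dotProduct]
    rw [hzAy, dotProduct_comm x z, dotProduct_comm x y]
    ring
  have h1 := hA.posSemidef.dotProduct_mulVec_nonneg (z - y)
  have h2 := h.dotProduct_mulVec_nonneg y
  simp only [star_trivial] at h1 h2 ⊢
  rw [key]
  exact add_nonneg h1 h2

private lemma smul_one_posDef {n : Type*} [Fintype n] [DecidableEq n] {c : ℝ} (hc : 0 < c) :
    (c • (1 : Matrix n n ℝ)).PosDef := by
  refine Matrix.PosDef.of_dotProduct_mulVec_pos ?_ ?_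
  · simp [Matrix.IsHermitian, Matrix.conjTranspose_smul]
  · intro x hx
    simpa only [Matrix.smul_mulVec, Matrix.one_mulVec, dotProduct_smul, smul_eq_mul]
      using mul_pos hc (Matrix.dotProduct_star_self_pos_iff.mpr hx)

private lemma smul_posDef {n : Type*} [Fintype n] {M : Matrix n n ℝ} (hM : M.PosDef)
    {c : ℝ} (hc : 0 < c) : (c • M).PosDef := by
  refine Matrix.PosDef.of_dotProduct_mulVec_pos ?_ ?_
  · have ht : Mᵀ = M := by
      rw [← Matrix.conjTranspose_eq_transpose_of_trivial]; exact hM.isHermitian.eq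
    simp [Matrix.IsHermitian, Matrix.conjTranspose_smul, ht]
  · intro x hx
    simpa only [Matrix.smul_mulVec, dotProduct_smul, smul_eq_mul]
      using mul_pos hc (hM.dotProduct_mulVec_pos hx)

open scoped MatrixOrder in
private lemma norm_le_of_psd_bound {d : ℕ} {P : Matrix (Fin d) (Fin d) ℝ} {c : ℝ}
    (hP : P.PosSemidef) (hc0 : 0 ≤ c)
    (hc : (c • (1 : Matrix (Fin d) (Fin d) ℝ) - P).PosSemidef)
    (g : EuclideanSpace ℝ (Fin d)) :
    ‖Matrix.toEuclideanCLM (𝕜 := ℝ) P g‖ ≤ c * ‖g‖ := by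
  set S := CFC.sqrt P with hSdef
  have hS : S * S = P := CFC.sqrt_mul_sqrt_self P hP.nonneg
  have hSH : Sᴴ = S := (CFC.sqrt_nonneg P).posSemidef.1
  have h2 : S * P * S = P * P := by
    rw [← hS]
    simp only [Matrix.mul_assoc]
  have h1 : S * (c • 1 - P) * S = c • P - P * P := by
    rw [Matrix.mul_sub, Matrix.sub_mul, mul_smul_comm, Matrix.mul_one, smul_mul_assoc, hS, h2]
  have hmid : (c • P - P * P).PosSemidef := by
    have := hc.conjTranspose_mul_mul_same S
    rwa [hSH, h1] at this
  set x : Fin d → ℝ := WithLp.ofLp g with hx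
  have q1 : 0 ≤ c * (x ⬝ᵥ x) - x ⬝ᵥ P *ᵥ x := by
    have := hc.dotProduct_mulVec_nonneg x
    simpa only [star_trivial, Matrix.sub_mulVec, Matrix.smul_mulVec, Matrix.one_mulVec,
      dotProduct_sub, dotProduct_smul, smul_eq_mul] using this
  have q2 : 0 ≤ c * (x ⬝ᵥ P *ᵥ x) - x ⬝ᵥ (P * P) *ᵥ x := by
    have := hmid.dotProduct_mulVec_nonneg x
    simpa only [star_trivial, Matrix.sub_mulVec, Matrix.smul_mulVec,
      dotProduct_sub, dotProduct_smul, smul_eq_mul] using this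
  have hsq : x ⬝ᵥ (P * P) *ᵥ x ≤ c ^ 2 * (x ⬝ᵥ x) := by nlinarith [q1, q2, hc0]
  have hng : ‖g‖ ^ 2 = x ⬝ᵥ x := by
    rw [← real_inner_self_eq_norm_sq, EuclideanSpace.inner_eq_star_dotProduct, star_trivial]
  have hnv : ‖Matrix.toEuclideanCLM (𝕜 := ℝ) P g‖ ^ 2 = x ⬝ᵥ (P * P) *ᵥ x := by
    rw [← real_inner_self_eq_norm_sq, EuclideanSpace.inner_eq_star_dotProduct, star_trivial,
      Matrix.ofLp_toEuclideanCLM, ← hx]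
    rw [← Matrix.mulVec_mulVec]
    exact (dot_symm hP.1 x (P *ᵥ x)).symm
  have hfin : ‖Matrix.toEuclideanCLM (𝕜 := ℝ) P g‖ ^ 2 ≤ (c * ‖g‖) ^ 2 := by
    rw [hnv, mul_pow, hng]
    exact hsq
  nlinarith [norm_nonneg (Matrix.toEuclideanCLM (𝕜 := ℝ) P g), norm_nonneg g,
    mul_nonneg hc0 (norm_nonneg g), hfin]

/-- Newton-type residual contraction.  If H̃ is symmetric invertible with
H̃² ⪰ μ²I and H̃² ⪯ Q ⪯ ηH̃², then ‖g − H̃Q⁻¹H̃g‖ ≤ (1 − 1/η)‖g‖. -/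
theorem newton_residual_contraction {d : ℕ} (Ht Q : Matrix (Fin d) (Fin d) ℝ)
    (μ η : ℝ) (hμ : 0 < μ) (hη : 1 ≤ η)
    (hsym : Ht.IsSymm) (hinv : IsUnit Ht)
    (hlb : (Ht ^ 2 - μ ^ 2 • (1 : Matrix (Fin d) (Fin d) ℝ)).PosSemidef)
    (hQ : Q.PosDef)
    (h1 : (Q - Ht ^ 2).PosSemidef) (h2 : (η • Ht ^ 2 - Q).PosSemidef)
    (g : EuclideanSpace ℝ (Fin d)) :
    ‖g - Matrix.toEuclideanCLM (𝕜 := ℝ) (Ht * Q⁻¹ * Ht) g‖ ≤ (1 - 1 / η) * ‖g‖ := by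
  have hη0 : 0 < η := lt_of_lt_of_le one_pos hη
  have hHtdet : IsUnit Ht.det := (Matrix.isUnit_iff_isUnit_det Ht).mp hinv
  have hHtH : Htᴴ = Ht := by
    rw [Matrix.conjTranspose_eq_transpose_of_trivial]; exact hsym
  have hHt2pd : (Ht ^ 2).PosDef := by
    have hs : (μ ^ 2 • (1 : Matrix (Fin d) (Fin d) ℝ)).PosDef :=
      smul_one_posDef (by positivity)
    have := Matrix.PosDef.posSemidef_add hlb hs
    simpa using this
  have hn1 : ((Ht ^ 2)⁻¹ - Q⁻¹).PosSemidef := inv_sub_inv_psd hHt2pd hQ h1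
  have hsm : (η • Ht ^ 2).PosDef := smul_posDef hHt2pd hη0
  have hn2 : (Q⁻¹ - (η • Ht ^ 2)⁻¹).PosSemidef := inv_sub_inv_psd hQ hsm h2
  have hHt2det : IsUnit (Ht ^ 2).det := (Matrix.isUnit_iff_isUnit_det _).mp (hinv.pow 2)
  have hinvsmul : (η • Ht ^ 2)⁻¹ = η⁻¹ • (Ht ^ 2)⁻¹ := by
    apply Matrix.inv_eq_right_inv
    rw [smul_mul_assoc, mul_smul_comm, smul_smul, mul_inv_cancel₀ (ne_of_gt hη0), one_smul,
      Matrix.mul_nonsing_inv _ hHt2det]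
  have hHtinvHt : Ht * (Ht ^ 2)⁻¹ * Ht = 1 := by
    rw [pow_two, Matrix.mul_inv_rev, Matrix.mul_assoc, Matrix.mul_assoc,
      Matrix.nonsing_inv_mul _ hHtdet, Matrix.mul_one, Matrix.mul_nonsing_inv _ hHtdet]
  have hP1 : (1 - Ht * Q⁻¹ * Ht).PosSemidef := by
    have h := hn1.conjTranspose_mul_mul_same Ht
    rw [hHtH] at h
    have he : Ht * ((Ht ^ 2)⁻¹ - Q⁻¹) * Ht = 1 - Ht * Q⁻¹ * Ht := by
      rw [Matrix.mul_sub, Matrix.sub_mul, hHtinvHt]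
    rwa [he] at h
  have hP2 : (Ht * Q⁻¹ * Ht - η⁻¹ • 1).PosSemidef := by
    have h := hn2.conjTranspose_mul_mul_same Ht
    rw [hHtH] at h
    have he : Ht * (Q⁻¹ - (η • Ht ^ 2)⁻¹) * Ht = Ht * Q⁻¹ * Ht - η⁻¹ • 1 := by
      rw [hinvsmul, Matrix.mul_sub, Matrix.sub_mul, mul_smul_comm, smul_mul_assoc, hHtinvHt]
    rwa [he] at h
  have hc0 : 0 ≤ 1 - 1 / η := by
    have : 1 / η ≤ 1 := by
      rw [div_le_one hη0]; exact hη
    linarith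
  have hcP : ((1 - 1 / η) • (1 : Matrix (Fin d) (Fin d) ℝ)
      - (1 - Ht * Q⁻¹ * Ht)).PosSemidef := by
    have he : (1 - 1 / η) • (1 : Matrix (Fin d) (Fin d) ℝ) - (1 - Ht * Q⁻¹ * Ht)
        = Ht * Q⁻¹ * Ht - η⁻¹ • 1 := by
      rw [sub_smul, one_smul, one_div]
      abel
    rwa [he]
  have hfin := norm_le_of_psd_bound hP1 hc0 hcP g
  have hg : Matrix.toEuclideanCLM (𝕜 := ℝ) (1 - Ht * Q⁻¹ * Ht) g
      = g - Matrix.toEuclideanCLM (𝕜 := ℝ) (Ht * Q⁻¹ * Ht) g := by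
    simp [map_sub, _root_.map_one, ContinuousLinearMap.sub_apply]
  rwa [hg] at hfin
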